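/- Let b₁, …, b₆, c₁, …, c₆, s₁, …, s₆ be real numbers satisfying: b₁² + b₃² + b₅² + (c₆b₆)² = b₂² + b₄² + b₆² + (c₃b₃)², c₂b₂ + c₃b₃ = c₅b₅ + c₆b₆, b₂c₁ = b₃, b₂c₃ = b₁, b₅c₄ = b₆, b₅c₆ = b₄, s₂ = s₃ = s₅ = s₆ = 0, and s₁ = s₄. Then the following equalities of polynomials in ℂ[x] hold: Q₁⁺ = Q₄⁺, Q₂⁺ = Q₅⁺, Q₃⁺ = Q₆⁺, Q₃⁻ = Q₆⁻ and Q₂⁻ = Q₅⁻. -/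
import Mathlib

open Polynomial

noncomputable section

/-- The quad polynomial `Qᵢ⁺`, with 0-based indexing: `Qp b c s i` is `Q_{i+1}⁺` of the
parameters `b₁,…,b₆ = b 0,…,b 5`, etc. (indices mod 6). -/
def Qp (b c s : Fin 6 → ℝ) (i : Fin 6) : Polynomial ℂ :=
  (X + C (((b (i+2) * c (i+2) - b i * c i : ℝ) : ℂ) / 2 - ((s i : ℝ) : ℂ) / 2 * Complex.I))^2
  + C (Complex.I / 2 * ((b i * s (i+1) + b (i+2) * s (i+2) + s (i+1) * b (i+2) * c (i+1)
        + s (i+2) * b i * c (i+1) : ℝ) : ℂ)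
      - ((b i * b (i+2) * c (i+1) - s (i+1) * s (i+2) * c (i+1) : ℝ) : ℂ) / 2
      + (((s (i+1))^2 + (s (i+2))^2 - (b i)^2 + (b (i+1))^2 - (b (i+2))^2
        - (b (i+1))^2 * (c (i+1))^2 : ℝ) : ℂ) / 4)

/-- The quad polynomial `Qᵢ⁻`: obtained from `Qᵢ⁺` by negating all `b j`, all `c j`,
and `s₂, s₄, s₆` (the `s j` with odd 0-based index `j`), keeping `s₁, s₃, s₅`. -/
def Qm (b c s : Fin 6 → ℝ) (i : Fin 6) : Polynomial ℂ :=
  Qp (fun j => -b j) (fun j => -c j) (fun j => if j.val % 2 = 1 then -s j else s j) i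

lemma quad_eq {a a' d d' : ℂ} (h : a = a') (h' : d = d') :
    (X + C a)^2 + C d = (X + C a')^2 + C d' := by rw [h, h']

/-- The equations defining the new family of mobile 6R linkages imply the quad-polynomial
equalities `Q₁⁺ = Q₄⁺`, `Q₂⁺ = Q₅⁺`, `Q₃⁺ = Q₆⁺`, `Q₃⁻ = Q₆⁻` and `Q₂⁻ = Q₅⁻`. -/
theorem new_linkage_implies_quad_equalities (b c s : Fin 6 → ℝ)
    (h1 : (b 0)^2 + (b 2)^2 + (b 4)^2 + (c 5 * b 5)^2 =
          (b 1)^2 + (b 3)^2 + (b 5)^2 + (c 2 * b 2)^2)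
    (h2 : c 1 * b 1 + c 2 * b 2 = c 4 * b 4 + c 5 * b 5)
    (h3 : b 1 * c 0 = b 2) (h4 : b 1 * c 2 = b 0)
    (h5 : b 4 * c 3 = b 5) (h6 : b 4 * c 5 = b 3)
    (hs2 : s 1 = 0) (hs3 : s 2 = 0) (hs5 : s 4 = 0) (hs6 : s 5 = 0)
    (hs14 : s 0 = s 3) :
    Qp b c s 0 = Qp b c s 3 ∧ Qp b c s 1 = Qp b c s 4 ∧ Qp b c s 2 = Qp b c s 5 ∧
    Qm b c s 2 = Qm b c s 5 ∧ Qm b c s 1 = Qm b c s 4 := by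
  have e2 : ((b 2 : ℝ) : ℂ) = ((b 1 : ℝ) : ℂ) * ((c 0 : ℝ) : ℂ) := by exact_mod_cast h3.symm
  have e0 : ((b 0 : ℝ) : ℂ) = ((b 1 : ℝ) : ℂ) * ((c 2 : ℝ) : ℂ) := by exact_mod_cast h4.symm
  have e5 : ((b 5 : ℝ) : ℂ) = ((b 4 : ℝ) : ℂ) * ((c 3 : ℝ) : ℂ) := by exact_mod_cast h5.symm
  have e3 : ((b 3 : ℝ) : ℂ) = ((b 4 : ℝ) : ℂ) * ((c 5 : ℝ) : ℂ) := by exact_mod_cast h6.symm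
  have z1 : ((s 1 : ℝ) : ℂ) = 0 := by exact_mod_cast hs2
  have z2 : ((s 2 : ℝ) : ℂ) = 0 := by exact_mod_cast hs3
  have z4 : ((s 4 : ℝ) : ℂ) = 0 := by exact_mod_cast hs5
  have z5 : ((s 5 : ℝ) : ℂ) = 0 := by exact_mod_cast hs6
  have e14 : ((s 0 : ℝ) : ℂ) = ((s 3 : ℝ) : ℂ) := by exact_mod_cast hs14
  have H1 : ((b 0 : ℝ) : ℂ)^2 + ((b 2 : ℝ) : ℂ)^2 + ((b 4 : ℝ) : ℂ)^2
        + (((c 5 : ℝ) : ℂ) * ((b 5 : ℝ) : ℂ))^2 =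
      ((b 1 : ℝ) : ℂ)^2 + ((b 3 : ℝ) : ℂ)^2 + ((b 5 : ℝ) : ℂ)^2
        + (((c 2 : ℝ) : ℂ) * ((b 2 : ℝ) : ℂ))^2 := by exact_mod_cast h1
  have H2 : ((c 1 : ℝ) : ℂ) * ((b 1 : ℝ) : ℂ) + ((c 2 : ℝ) : ℂ) * ((b 2 : ℝ) : ℂ) =
      ((c 4 : ℝ) : ℂ) * ((b 4 : ℝ) : ℂ) + ((c 5 : ℝ) : ℂ) * ((b 5 : ℝ) : ℂ) := by
    exact_mod_cast h2
  simp only [e2, e0, e5, e3] at H1 H2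
  refine ⟨?_, ?_, ?_, ?_, ?_⟩
  · show (X + C _)^2 + C _ = (X + C _)^2 + C _
    apply quad_eq
    · simp only [show ((0:Fin 6)+1) = 1 from rfl, show ((0:Fin 6)+2) = 2 from rfl, show ((1:Fin 6)+1) = 2 from rfl, show ((1:Fin 6)+2) = 3 from rfl, show ((2:Fin 6)+1) = 3 from rfl, show ((2:Fin 6)+2) = 4 from rfl, show ((3:Fin 6)+1) = 4 from rfl, show ((3:Fin 6)+2) = 5 from rfl, show ((4:Fin 6)+1) = 5 from rfl, show ((4:Fin 6)+2) = 0 from rfl, show ((5:Fin 6)+1) = 0 from rfl, show ((5:Fin 6)+2) = 1 from rfl, show (if (0:Fin 6).val % 2 = 1 then -s 0 else s 0) = s 0 from rfl, show (if (1:Fin 6).val % 2 = 1 then -s 1 else s 1) = -s 1 from rfl, show (if (2:Fin 6).val % 2 = 1 then -s 2 else s 2) = s 2 from rfl, show (if (3:Fin 6).val % 2 = 1 then -s 3 else s 3) = -s 3 from rfl, show (if (4:Fin 6).val % 2 = 1 then -s 4 else s 4) = s 4 from rfl, show (if (5:Fin 6).val % 2 = 1 then -s 5 else s 5) = -s 5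 from rfl]
      push_cast
      simp only [e2, e0, e5, e3, z1, z2, z4, z5, e14]
      ring
    · simp only [show ((0:Fin 6)+1) = 1 from rfl, show ((0:Fin 6)+2) = 2 from rfl, show ((1:Fin 6)+1) = 2 from rfl, show ((1:Fin 6)+2) = 3 from rfl, show ((2:Fin 6)+1) = 3 from rfl, show ((2:Fin 6)+2) = 4 from rfl, show ((3:Fin 6)+1) = 4 from rfl, show ((3:Fin 6)+2) = 5 from rfl, show ((4:Fin 6)+1) = 5 from rfl, show ((4:Fin 6)+2) = 0 from rfl, show ((5:Fin 6)+1) = 0 from rfl, show ((5:Fin 6)+2) = 1 from rfl, show (if (0:Fin 6).val % 2 = 1 then -s 0 else s 0) = s 0 from rfl, show (if (1:Fin 6).val % 2 = 1 then -s 1 else s 1) = -s 1 from rfl, show (if (2:Fin 6).val % 2 = 1 then -s 2 else s 2) = s 2 from rfl, show (if (3:Fin 6).val % 2 = 1 then -s 3 else s 3) = -s 3 from rfl, show (if (4:Fin 6).val % 2 = 1 then -s 4 else s 4) = s 4 from rfl, show (if (5:Fin 6).val % 2 = 1 then -s 5 else s 5) = -s 5 from rfl]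
      push_cast
      simp only [e2, e0, e5, e3, z1, z2, z4, z5, e14]
      linear_combination (-(1/4) : ℂ) * H1 - ((((b 1:ℝ):ℂ) * (((c 1:ℝ):ℂ) + ((c 0:ℝ):ℂ) * ((c 2:ℝ):ℂ)) + ((b 4:ℝ):ℂ) * (((c 4:ℝ):ℂ) + ((c 3:ℝ):ℂ) * ((c 5:ℝ):ℂ))) / 4) * H2
  · show (X + C _)^2 + C _ = (X + C _)^2 + C _
    apply quad_eq
    · simp only [show ((0:Fin 6)+1) = 1 from rfl, show ((0:Fin 6)+2) = 2 from rfl, show ((1:Fin 6)+1) = 2 from rfl, show ((1:Fin 6)+2) = 3 from rfl, show ((2:Fin 6)+1) = 3 from rfl, show ((2:Fin 6)+2) = 4 from rfl, show ((3:Fin 6)+1) = 4 from rfl, show ((3:Fin 6)+2) = 5 from rfl, show ((4:Fin 6)+1) = 5 from rfl, show ((4:Fin 6)+2) = 0 from rfl, show ((5:Fin 6)+1) = 0 from rfl, show ((5:Fin 6)+2) = 1 from rfl, show (if (0:Fin 6).val % 2 = 1 then -s 0 else s 0) = s 0 from rfl, show (if (1:Fin 6).val % 2 = 1 then -s 1 else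 s 1) = -s 1 from rfl, show (if (2:Fin 6).val % 2 = 1 then -s 2 else s 2) = s 2 from rfl, show (if (3:Fin 6).val % 2 = 1 then -s 3 else s 3) = -s 3 from rfl, show (if (4:Fin 6).val % 2 = 1 then -s 4 else s 4) = s 4 from rfl, show (if (5:Fin 6).val % 2 = 1 then -s 5 else s 5) = -s 5 from rfl]
      push_cast
      simp only [e2, e0, e5, e3, z1, z2, z4, z5, e14]
      linear_combination (-(1/2) : ℂ) * H2
    · simp only [show ((0:Fin 6)+1) = 1 from rfl, show ((0:Fin 6)+2) = 2 from rfl, show ((1:Fin 6)+1) = 2 from rfl, show ((1:Fin 6)+2) = 3 from rfl, show ((2:Fin 6)+1) = 3 from rfl, show ((2:Fin 6)+2) = 4 from rfl, show ((3:Fin 6)+1) = 4 from rfl, show ((3:Fin 6)+2) = 5 from rfl, show ((4:Fin 6)+1) = 5 from rfl, show ((4:Fin 6)+2) = 0 from rfl, show ((5:Fin 6)+1) = 0 from rfl, show ((5:Fin 6)+2) = 1 from rfl, show (if (0:Fin 6).val % 2 = 1 then -s 0 else s 0) = s 0 from rfl, show (if (1:Fin 6).val % 2 = 1 then -s 1 else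 s 1) = -s 1 from rfl, show (if (2:Fin 6).val % 2 = 1 then -s 2 else s 2) = s 2 from rfl, show (if (3:Fin 6).val % 2 = 1 then -s 3 else s 3) = -s 3 from rfl, show (if (4:Fin 6).val % 2 = 1 then -s 4 else s 4) = s 4 from rfl, show (if (5:Fin 6).val % 2 = 1 then -s 5 else s 5) = -s 5 from rfl]
      push_cast
      simp only [e2, e0, e5, e3, z1, z2, z4, z5, e14]
      linear_combination ((1/4) : ℂ) * H1
  · show (X + C _)^2 + C _ = (X + C _)^2 + C _
    apply quad_eq
    · simp only [show ((0:Fin 6)+1) = 1 from rfl, show ((0:Fin 6)+2) = 2 from rfl, show ((1:Fin 6)+1) = 2 from rfl, show ((1:Fin 6)+2) = 3 from rfl, show ((2:Fin 6)+1) = 3 from rfl, show ((2:Fin 6)+2) = 4 from rfl, show ((3:Fin 6)+1) = 4 from rfl, show ((3:Fin 6)+2) = 5 from rfl, show ((4:Fin 6)+1) = 5 from rfl, show ((4:Fin 6)+2) = 0 from rfl, show ((5:Fin 6)+1) = 0 from rfl, show ((5:Fin 6)+2) = 1 from rfl, show (if (0:Fin 6).val % 2 = 1 then -s 0 else s 0)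 = s 0 from rfl, show (if (1:Fin 6).val % 2 = 1 then -s 1 else s 1) = -s 1 from rfl, show (if (2:Fin 6).val % 2 = 1 then -s 2 else s 2) = s 2 from rfl, show (if (3:Fin 6).val % 2 = 1 then -s 3 else s 3) = -s 3 from rfl, show (if (4:Fin 6).val % 2 = 1 then -s 4 else s 4) = s 4 from rfl, show (if (5:Fin 6).val % 2 = 1 then -s 5 else s 5) = -s 5 from rfl]
      push_cast
      simp only [e2, e0, e5, e3, z1, z2, z4, z5, e14]
      linear_combination (-(1/2) : ℂ) * H2
    · simp only [show ((0:Fin 6)+1) = 1 from rfl, show ((0:Fin 6)+2) = 2 from rfl, show ((1:Fin 6)+1) = 2 from rfl, show ((1:Fin 6)+2) = 3 from rfl, show ((2:Fin 6)+1) = 3 from rfl, show ((2:Fin 6)+2) = 4 from rfl, show ((3:Fin 6)+1) = 4 from rfl, show ((3:Fin 6)+2) = 5 from rfl, show ((4:Fin 6)+1) = 5 from rfl, show ((4:Fin 6)+2) = 0 from rfl, show ((5:Fin 6)+1) = 0 from rfl, show ((5:Fin 6)+2) = 1 from rfl, show (if (0:Fin 6).val % 2 = 1 then -s 0 else s 0)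 = s 0 from rfl, show (if (1:Fin 6).val % 2 = 1 then -s 1 else s 1) = -s 1 from rfl, show (if (2:Fin 6).val % 2 = 1 then -s 2 else s 2) = s 2 from rfl, show (if (3:Fin 6).val % 2 = 1 then -s 3 else s 3) = -s 3 from rfl, show (if (4:Fin 6).val % 2 = 1 then -s 4 else s 4) = s 4 from rfl, show (if (5:Fin 6).val % 2 = 1 then -s 5 else s 5) = -s 5 from rfl]
      push_cast
      simp only [e2, e0, e5, e3, z1, z2, z4, z5, e14]
      linear_combination (-(1/4) : ℂ) * H1
  · show (X + C _)^2 + C _ = (X + C _)^2 + C _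
    apply quad_eq
    · simp only [show ((0:Fin 6)+1) = 1 from rfl, show ((0:Fin 6)+2) = 2 from rfl, show ((1:Fin 6)+1) = 2 from rfl, show ((1:Fin 6)+2) = 3 from rfl, show ((2:Fin 6)+1) = 3 from rfl, show ((2:Fin 6)+2) = 4 from rfl, show ((3:Fin 6)+1) = 4 from rfl, show ((3:Fin 6)+2) = 5 from rfl, show ((4:Fin 6)+1) = 5 from rfl, show ((4:Fin 6)+2) = 0 from rfl, show ((5:Fin 6)+1) = 0 from rfl, show ((5:Fin 6)+2) = 1 from rfl, show (if (0:Fin 6).val % 2 = 1 then -s 0 else s 0) = s 0 from rfl, show (if (1:Fin 6).val % 2 = 1 then -s 1 else s 1) = -s 1 from rfl, show (if (2:Fin 6).val % 2 = 1 then -s 2 else s 2) = s 2 from rfl, show (if (3:Fin 6).val % 2 = 1 then -s 3 else s 3) = -s 3 from rfl, show (if (4:Fin 6).val % 2 = 1 then -s 4 else s 4) = s 4 from rfl, show (if (5:Fin 6).val % 2 = 1 then -s 5 else s 5) = -s 5 from rfl]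
      push_cast
      simp only [e2, e0, e5, e3, z1, z2, z4, z5, e14]
      linear_combination (-(1/2) : ℂ) * H2
    · simp only [show ((0:Fin 6)+1) = 1 from rfl, show ((0:Fin 6)+2) = 2 from rfl, show ((1:Fin 6)+1) = 2 from rfl, show ((1:Fin 6)+2) = 3 from rfl, show ((2:Fin 6)+1) = 3 from rfl, show ((2:Fin 6)+2) = 4 from rfl, show ((3:Fin 6)+1) = 4 from rfl, show ((3:Fin 6)+2) = 5 from rfl, show ((4:Fin 6)+1) = 5 from rfl, show ((4:Fin 6)+2) = 0 from rfl, show ((5:Fin 6)+1) = 0 from rfl, show ((5:Fin 6)+2) = 1 from rfl, show (if (0:Fin 6).val % 2 = 1 then -s 0 else s 0) = s 0 from rfl, show (if (1:Fin 6).val % 2 = 1 then -s 1 else s 1) = -s 1 from rfl, show (if (2:Fin 6).val % 2 = 1 then -s 2 else s 2) = s 2 from rfl, show (if (3:Fin 6).val % 2 = 1 then -s 3 else s 3) = -s 3 from rfl, show (if (4:Fin 6).val % 2 = 1 then -s 4 else s 4) = s 4 from rfl, show (if (5:Fin 6).val % 2 = 1 then -s 5 else s 5) = -s 5 from rfl]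
      push_cast
      simp only [e2, e0, e5, e3, z1, z2, z4, z5, e14]
      linear_combination (-(1/4) : ℂ) * H1
  · show (X + C _)^2 + C _ = (X + C _)^2 + C _
    apply quad_eq
    · simp only [show ((0:Fin 6)+1) = 1 from rfl, show ((0:Fin 6)+2) = 2 from rfl, show ((1:Fin 6)+1) = 2 from rfl, show ((1:Fin 6)+2) = 3 from rfl, show ((2:Fin 6)+1) = 3 from rfl, show ((2:Fin 6)+2) = 4 from rfl, show ((3:Fin 6)+1) = 4 from rfl, show ((3:Fin 6)+2) = 5 from rfl, show ((4:Fin 6)+1) = 5 from rfl, show ((4:Fin 6)+2) = 0 from rfl, show ((5:Fin 6)+1) = 0 from rfl, show ((5:Fin 6)+2) = 1 from rfl, show (if (0:Fin 6).val % 2 = 1 then -s 0 else s 0) = s 0 from rfl, show (if (1:Fin 6).val % 2 = 1 then -s 1 else s 1) = -s 1 from rfl, show (if (2:Fin 6).val % 2 = 1 then -s 2 else s 2) = s 2 from rfl, show (if (3:Fin 6).val % 2 = 1 then -s 3 else s 3) = -s 3 from rfl, show (if (4:Fin 6).val % 2 = 1 then -s 4 else s 4) = s 4 from rfl, show (if (5:Fin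 6).val % 2 = 1 then -s 5 else s 5) = -s 5 from rfl]
      push_cast
      simp only [e2, e0, e5, e3, z1, z2, z4, z5, e14]
      linear_combination (-(1/2) : ℂ) * H2
    · simp only [show ((0:Fin 6)+1) = 1 from rfl, show ((0:Fin 6)+2) = 2 from rfl, show ((1:Fin 6)+1) = 2 from rfl, show ((1:Fin 6)+2) = 3 from rfl, show ((2:Fin 6)+1) = 3 from rfl, show ((2:Fin 6)+2) = 4 from rfl, show ((3:Fin 6)+1) = 4 from rfl, show ((3:Fin 6)+2) = 5 from rfl, show ((4:Fin 6)+1) = 5 from rfl, show ((4:Fin 6)+2) = 0 from rfl, show ((5:Fin 6)+1) = 0 from rfl, show ((5:Fin 6)+2) = 1 from rfl, show (if (0:Fin 6).val % 2 = 1 then -s 0 else s 0) = s 0 from rfl, show (if (1:Fin 6).val % 2 = 1 then -s 1 else s 1) = -s 1 from rfl, show (if (2:Fin 6).val % 2 = 1 then -s 2 else s 2) = s 2 from rfl, show (if (3:Fin 6).val % 2 = 1 then -s 3 else s 3) = -s 3 from rfl, show (if (4:Fin 6).val % 2 = 1 then -s 4 else s 4) = s 4 from rfl, show (if (5:Fin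 6).val % 2 = 1 then -s 5 else s 5) = -s 5 from rfl]
      push_cast
      simp only [e2, e0, e5, e3, z1, z2, z4, z5, e14]
      linear_combination ((1/4) : ℂ) * H1
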